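/- There exists a constant C > 0 such that for all positive integers m, d and every real 0 < V ≤ 1, there exists a set S of functions Fin d → Fin m with |S| ≤ m · 2^(C·(d + log₂(1/V))) such that S intersects every combinatorial rectangle in (Fin m)^d of volume at least V. -/

import Mathlib

theorem exists_small_rectangle_hitting_set :
    ∃ C : ℝ, 0 < C ∧ ∀ m d : ℕ, 0 < m → 0 < d → ∀ V : ℝ, 0 < V → V ≤ 1 →
      ∃ S : Finset (Fin d → Fin m),
        (S.card : ℝ) ≤ (m : ℝ) * (2 : ℝ) ^ (C * ((d : ℝ) + Real.logb 2 (1 / V))) ∧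
        ∀ R : Fin d → Finset (Fin m),
          V ≤ (∏ i, ((R i).card : ℝ)) / (m : ℝ) ^ d →
          ∃ f ∈ S, ∀ i, f i ∈ R i := by
  refine ⟨2, two_pos, ?_⟩
  intro m d hm hd V hV hV1
  set t : ℕ := ⌊(m * d : ℝ) / V⌋₊ + 1 with ht
  set N : ℕ := m ^ d with hN
  have hNpos : 0 < N := pow_pos hm d
  have hcardfun : Fintype.card (Fin d → Fin m) = N := by
    simp [Fintype.card_fun, hN]
  set 𝓡 : Finset (Fin d → Finset (Fin m)) :=
    Finset.univ.filter (fun R => V ≤ (∏ i, ((R i).card : ℝ)) / (m : ℝ) ^ d) with h𝓡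
  set Bad : Finset (Fin t → (Fin d → Fin m)) :=
    Finset.univ.filter (fun g => ∃ R ∈ 𝓡, ∀ j, g j ∉ Fintype.piFinset R) with hBad
  -- count bad tuples
  have hsub : Bad ⊆ 𝓡.biUnion
      (fun R => Finset.univ.filter (fun g : Fin t → (Fin d → Fin m) => ∀ j, g j ∉ Fintype.piFinset R)) := by
    intro g hg
    simp only [hBad, Finset.mem_filter] at hg
    obtain ⟨R, hR, hmiss⟩ := hg.2
    exact Finset.mem_biUnion.2 ⟨R, hR, Finset.mem_filter.2 ⟨Finset.mem_univ _, hmiss⟩⟩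
  have hmisscard : ∀ R : Fin d → Finset (Fin m),
      (Finset.univ.filter (fun g : Fin t → (Fin d → Fin m) => ∀ j, g j ∉ Fintype.piFinset R)).card
        = (N - (Fintype.piFinset R).card) ^ t := by
    intro R
    have he : Finset.univ.filter (fun g : Fin t → (Fin d → Fin m) => ∀ j, g j ∉ Fintype.piFinset R)
        = Fintype.piFinset (fun _ : Fin t => (Fintype.piFinset R)ᶜ) := by
      ext g
      simp [Fintype.mem_piFinset]
    rw [he, Fintype.card_piFinset]
    simp [Finset.card_compl, hcardfun]
  have hcardBad : Bad.card ≤ ∑ R ∈ 𝓡, (N - (Fintype.piFinset R).card) ^ t := by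
    calc Bad.card ≤ _ := Finset.card_le_card hsub
    _ ≤ _ := Finset.card_biUnion_le
    _ = _ := Finset.sum_congr rfl (fun R _ => hmisscard R)
  -- per-rectangle real bound
  have hper : ∀ R ∈ 𝓡, ((N - (Fintype.piFinset R).card : ℕ) : ℝ) ≤ (1 - V) * N := by
    intro R hR
    have hle : (Fintype.piFinset R).card ≤ N := by
      rw [← hcardfun]; exact Finset.card_le_univ _
    have hvol : V ≤ (∏ i, ((R i).card : ℝ)) / (m : ℝ) ^ d := (Finset.mem_filter.1 hR).2
    have hcc : ((Fintype.piFinset R).card : ℝ) = ∏ i, ((R i).card : ℝ) := by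
      rw [Fintype.card_piFinset]; push_cast; ring
    have hNr : ((N : ℕ) : ℝ) = (m : ℝ) ^ d := by push_cast [hN]; ring
    have hVN : V * N ≤ ((Fintype.piFinset R).card : ℝ) := by
      rw [hcc, hNr]
      exact (le_div_iff₀ (by positivity)).mp hvol
    rw [Nat.cast_sub hle]
    nlinarith [hVN]
  have hRcard : (𝓡.card : ℝ) ≤ (2 : ℝ) ^ (m * d) := by
    have : 𝓡.card ≤ Fintype.card (Fin d → Finset (Fin m)) := Finset.card_le_univ _
    have hc : Fintype.card (Fin d → Finset (Fin m)) = (2 ^ m) ^ d := by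
      simp [Fintype.card_fun]
    calc (𝓡.card : ℝ) ≤ ((2 ^ m) ^ d : ℕ) := by exact_mod_cast hc ▸ this
    _ = (2 : ℝ) ^ (m * d) := by push_cast [← pow_mul]; ring
  -- the key strict inequality
  have hmdVt : (m * d : ℝ) < V * t := by
    have h1 : (m * d : ℝ) / V < t := by
      have := Nat.lt_floor_add_one ((m * d : ℝ) / V)
      push_cast [ht]
      push_cast at this
      linarith
    calc (m * d : ℝ) = ((m * d : ℝ) / V) * V := by field_simp
    _ < t * V := by
        apply mul_lt_mul_of_pos_right h1 hV
    _ = V * t := by ring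
  have hpow : (1 - V) ^ t * (2 : ℝ) ^ (m * d) < 1 := by
    have h1V : (0:ℝ) ≤ 1 - V := by linarith
    have h2 : (1 - V) ≤ (2 : ℝ) ^ (-V) := by
      have := Real.add_one_le_exp (-(V * Real.log 2))
      have hlog : Real.log 2 ≤ 1 := by
        have := Real.log_le_sub_one_of_pos (by norm_num : (0:ℝ) < 2)
        linarith
      rw [Real.rpow_def_of_pos (by norm_num : (0:ℝ) < 2),
        show Real.log 2 * -V = -(V * Real.log 2) by ring]
      have hV0 : 0 ≤ V := le_of_lt hV
      nlinarith [this, mul_le_mul_of_nonneg_left hlog hV0]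
    have h3 : (1 - V) ^ t ≤ ((2 : ℝ) ^ (-V)) ^ t := pow_le_pow_left₀ h1V h2 t
    have h4 : ((2 : ℝ) ^ (-V)) ^ t = (2 : ℝ) ^ (-V * t) := by
      rw [← Real.rpow_natCast ((2:ℝ) ^ (-V)) t, ← Real.rpow_mul (by norm_num)]
    have h5 : (2 : ℝ) ^ (-V * t) < (2 : ℝ) ^ (-(m * d : ℝ)) := by
      exact (Real.rpow_lt_rpow_left_iff (by norm_num : (1:ℝ) < 2)).mpr (by linarith)
    have h6 : (2 : ℝ) ^ (-(m * d : ℝ)) = ((2 : ℝ) ^ (m * d : ℕ))⁻¹ := by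
      rw [Real.rpow_neg (by norm_num)]
      congr 1
      rw [show ((m:ℝ) * (d:ℝ)) = ((m * d : ℕ) : ℝ) by push_cast; ring, Real.rpow_natCast]
    have h7 : (0:ℝ) < (2 : ℝ) ^ (m * d : ℕ) := by positivity
    calc (1 - V) ^ t * (2 : ℝ) ^ (m * d) ≤ (2 : ℝ) ^ (-V * t) * (2 : ℝ) ^ (m * d : ℕ) := by
          apply mul_le_mul_of_nonneg_right (le_trans h3 (le_of_eq h4)) (le_of_lt h7)
    _ < ((2 : ℝ) ^ (m * d : ℕ))⁻¹ * (2 : ℝ) ^ (m * d : ℕ) := by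
          apply mul_lt_mul_of_pos_right (h6 ▸ h5) h7
    _ = 1 := inv_mul_cancel₀ (ne_of_gt h7)
  have hkey : (Bad.card : ℝ) < (N : ℝ) ^ t := by
    have hN0 : (0:ℝ) ≤ (N:ℝ) := by positivity
    calc (Bad.card : ℝ) ≤ ∑ R ∈ 𝓡, ((N - (Fintype.piFinset R).card : ℕ) ^ t : ℝ) := by
          exact_mod_cast hcardBad
    _ ≤ ∑ R ∈ 𝓡, ((1 - V) * N) ^ t := by
          apply Finset.sum_le_sum
          intro R hR
          apply pow_le_pow_left₀ (by positivity) (hper R hR) t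
    _ = 𝓡.card * ((1 - V) * N) ^ t := by rw [Finset.sum_const, nsmul_eq_mul]
    _ ≤ (2 : ℝ) ^ (m * d) * ((1 - V) * N) ^ t := by
          apply mul_le_mul_of_nonneg_right hRcard (pow_nonneg (mul_nonneg (by linarith) hN0) t)
    _ = ((1 - V) ^ t * (2 : ℝ) ^ (m * d)) * (N : ℝ) ^ t := by rw [mul_pow]; ring
    _ < 1 * (N : ℝ) ^ t := by
          apply mul_lt_mul_of_pos_right hpow (by positivity)
    _ = (N : ℝ) ^ t := one_mul _
  -- extract a good tuple
  have hexists : ∃ g : Fin t → (Fin d → Fin m), g ∉ Bad := by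
    by_contra h
    push_neg at h
    have : Bad = Finset.univ := Finset.eq_univ_iff_forall.2 h
    have hcu : Bad.card = N ^ t := by
      rw [this, Finset.card_univ, Fintype.card_fun, hcardfun, Fintype.card_fin]
    rw [hcu] at hkey
    push_cast at hkey
    exact lt_irrefl _ hkey
  obtain ⟨g, hg⟩ := hexists
  refine ⟨Finset.image g Finset.univ, ?_, ?_⟩
  · -- cardinality bound
    have hc1 : ((Finset.image g Finset.univ).card : ℝ) ≤ t := by
      exact_mod_cast le_trans Finset.card_image_le (le_of_eq (by simp))
    have hc2 : (t : ℝ) ≤ (m * d : ℝ) / V + 1 := by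
      push_cast [ht]
      have := Nat.floor_le (by positivity : (0:ℝ) ≤ (m * d : ℝ) / V)
      push_cast at this
      linarith
    -- RHS simplification
    have hV' : (0:ℝ) < 1 / V := by positivity
    have hrp : (2 : ℝ) ^ ((2:ℝ) * ((d : ℝ) + Real.logb 2 (1 / V)))
        = (4 : ℝ) ^ d * (1 / V) ^ 2 := by
      rw [mul_add, Real.rpow_add (by norm_num : (0:ℝ) < 2)]
      congr 1
      · rw [show (2:ℝ) * (d:ℝ) = ((2 * d : ℕ) : ℝ) by push_cast; ring,
          Real.rpow_natCast, pow_mul]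
        norm_num
      · have hlb : (2:ℝ) ^ Real.logb 2 (1/V) = 1/V :=
          Real.rpow_logb (by norm_num) (by norm_num) hV'
        calc (2:ℝ) ^ ((2:ℝ) * Real.logb 2 (1/V))
            = ((2:ℝ) ^ Real.logb 2 (1/V)) ^ (2:ℕ) := by
              rw [← Real.rpow_natCast ((2:ℝ) ^ Real.logb 2 (1/V)) 2,
                ← Real.rpow_mul (by norm_num)]
              norm_num [mul_comm]
        _ = (1/V) ^ 2 := by rw [hlb]
    rw [hrp]
    have hm1 : (1:ℝ) ≤ m := by exact_mod_cast hm
    have hd1 : (1:ℝ) ≤ d := by exact_mod_cast hd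
    have h4 : (1:ℝ) + d * 3 ≤ (4:ℝ) ^ d := by
      have h := one_add_mul_le_pow (by norm_num : (-2:ℝ) ≤ 3) d
      calc (1:ℝ) + d * 3 ≤ ((1:ℝ) + 3) ^ d := h
      _ = (4:ℝ) ^ d := by norm_num
    have key2 : (m:ℝ) * d * V + V ^ 2 ≤ (m:ℝ) * (4:ℝ) ^ d := by
      nlinarith [mul_le_mul_of_nonneg_left h4 (le_trans zero_le_one hm1),
        mul_nonneg (mul_nonneg (le_trans zero_le_one hm1) (le_trans zero_le_one hd1))
          (sub_nonneg.2 hV1)]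
    have e1 : (m:ℝ) * d / V + 1 = ((m:ℝ) * d * V + V ^ 2) / V ^ 2 := by
      field_simp
    have e2 : (m:ℝ) * ((4:ℝ) ^ d * (1/V) ^ 2) = ((m:ℝ) * (4:ℝ) ^ d) / V ^ 2 := by
      field_simp
    have hfin : (m:ℝ) * d / V + 1 ≤ (m:ℝ) * ((4:ℝ) ^ d * (1/V) ^ 2) := by
      rw [e1, e2]
      gcongr
    linarith
  · -- hitting
    intro R hvol
    have hRmem : R ∈ 𝓡 := Finset.mem_filter.2 ⟨Finset.mem_univ _, hvol⟩
    simp only [hBad, Finset.mem_filter, Finset.mem_univ, true_and, not_exists] at hg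
    push_neg at hg
    obtain ⟨j, hj⟩ := hg R hRmem
    exact ⟨g j, Finset.mem_image_of_mem g (Finset.mem_univ j), fun i => (Fintype.mem_piFinset).1 hj i⟩
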